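/- Let K be an n×n Hermitian matrix with distinct eigenvalues λ₁ > ⋯ > λ_s and main angles β₁,…,β_s, and let a be a real number. Then the characteristic polynomial of K + aJ (J the all-ones matrix) satisfies P_{K+aJ}(x) = P_K(x) · (1 + a·Σ_{i=1}^s n β_i²/(λ_i − x)) as rational functions, i.e., for all x not an eigenvalue of K. -/

import Mathlib

open Matrix

/-- Characteristic polynomial of a rank-one (all-ones) perturbation: with `K` Hermitian,
spectral decomposition `K = Σ λ_i P_i` (distinct eigenvalues `λ₁ > ⋯ > λ_s`, main angles
`β_i² = ‖P_i 1‖²/n`), and `a ∈ ℝ`, for every `x` which is not an eigenvalue of `K`: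
`det(K + aJ − xI) = det(K − xI) · (1 + a Σ_i n β_i²/(λ_i − x))`. -/
theorem stmt_17 (n s : ℕ) (K : Matrix (Fin n) (Fin n) ℂ) (hK : K.IsHermitian)
    (lam : Fin s → ℝ) (hanti : StrictAnti lam)
    (P : Fin s → Matrix (Fin n) (Fin n) ℂ)
    (hPH : ∀ i, (P i).IsHermitian)
    (hPP : ∀ i j, P i * P j = if i = j then P i else 0)
    (hsum : ∑ i, P i = 1)
    (hspec : K = ∑ i, (lam i : ℂ) • P i)
    (a x : ℝ) (hx : ∀ i, x ≠ lam i) :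
    Matrix.det (K + (a : ℂ) • Matrix.of (fun _ _ : Fin n => (1 : ℂ)) - (x : ℂ) • 1)
      = Matrix.det (K - (x : ℂ) • 1) *
        (1 + (a : ℂ) * ∑ i,
          (n : ℂ) * ((star ((P i).mulVec fun _ => 1) ⬝ᵥ ((P i).mulVec fun _ => 1)) / n)
            / ((lam i : ℂ) - x)) := by
  classical
  set u : Fin n → ℂ := fun _ => 1 with hu
  set M : Matrix (Fin n) (Fin n) ℂ := K - (x : ℂ) • 1 with hM
  have hne : ∀ i, ((lam i : ℂ) - (x : ℂ)) ≠ 0 := by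
    intro i
    rw [sub_ne_zero]
    exact_mod_cast (hx i).symm
  set N : Matrix (Fin n) (Fin n) ℂ := ∑ i, ((lam i : ℂ) - (x : ℂ))⁻¹ • P i with hN
  have key : ∀ (c d : Fin s → ℂ),
      (∑ i, c i • P i) * (∑ j, d j • P j) = ∑ i, (c i * d i) • P i := by
    intro c d
    rw [Finset.sum_mul]
    refine Finset.sum_congr rfl fun i _ => ?_
    rw [Finset.mul_sum]
    rw [Finset.sum_eq_single i]
    · rw [smul_mul_assoc, mul_smul_comm, hPP, if_pos rfl, smul_smul]
    · intro j _ hj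
      rw [smul_mul_assoc, mul_smul_comm, hPP, if_neg (Ne.symm hj), smul_zero, smul_zero]
    · intro h; exact absurd (Finset.mem_univ i) h
  have hMsum : M = ∑ i, ((lam i : ℂ) - (x : ℂ)) • P i := by
    rw [hM, hspec, ← hsum, Finset.smul_sum, ← Finset.sum_sub_distrib]
    exact Finset.sum_congr rfl fun i _ => (sub_smul _ _ _).symm
  have hMN : M * N = 1 := by
    rw [hMsum, hN, key, ← hsum]
    refine Finset.sum_congr rfl fun i _ => ?_
    rw [mul_inv_cancel₀ (hne i), one_smul]
  have hUnit : IsUnit M.det := Matrix.isUnit_det_of_right_inverse hMN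
  have hMinv : M⁻¹ = N := Matrix.inv_eq_right_inv hMN
  have hLHS : K + (a : ℂ) • Matrix.of (fun _ _ : Fin n => (1 : ℂ)) - (x : ℂ) • 1
      = M + Matrix.replicateCol Unit (fun _ => (a : ℂ)) * Matrix.replicateRow Unit u := by
    ext i j
    simp [hM, Matrix.mul_apply, hu, Matrix.replicateCol, Matrix.replicateRow]
    ring
  rw [hLHS, Matrix.det_add_replicateCol_mul_replicateRow hUnit, hMinv]
  congr 1
  rw [Matrix.det_unique]
  -- scalar identity
  have hY : ∀ i, (star ((P i).mulVec u) ⬝ᵥ ((P i).mulVec u)) = ∑ k, ∑ j, P i k j := by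
    intro i
    have hsu : star u = u := by funext k; simp [hu]
    rw [Matrix.star_mulVec, hsu, Matrix.dotProduct_mulVec, Matrix.vecMul_vecMul,
      (hPH i).eq, hPP, if_pos rfl]
    simp [Matrix.vecMul, dotProduct, hu]
    exact Finset.sum_comm
  have hterm : ∀ i, (n : ℂ) * ((star ((P i).mulVec u) ⬝ᵥ ((P i).mulVec u)) / n)
      / ((lam i : ℂ) - x) = ((lam i : ℂ) - (x : ℂ))⁻¹ * ∑ k, ∑ j, P i k j := by
    intro i
    rw [hY]
    rcases eq_or_ne (n : ℂ) 0 with hn | hn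
    · have hn0 : n = 0 := by exact_mod_cast hn
      subst hn0
      simp
    · rw [mul_div_assoc', mul_comm, mul_div_assoc, div_self hn, mul_one, div_eq_inv_mul]
  simp only [hterm]
  simp only [Matrix.add_apply, Matrix.one_apply_eq, Matrix.mul_apply, Matrix.replicateRow_apply,
    Matrix.replicateCol_apply, Finset.univ_unique, Finset.sum_singleton]
  congr 1
  have hNval : ∀ k j, N k j = ∑ i, ((lam i : ℂ) - (x : ℂ))⁻¹ * P i k j := by
    intro k j
    simp [hN, Matrix.sum_apply]
  calc ∑ j, (∑ k, u k * N k j) * (a : ℂ)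
      = (a : ℂ) * ∑ j, ∑ k, N k j := by
        rw [Finset.mul_sum]
        refine Finset.sum_congr rfl fun j _ => ?_
        rw [mul_comm]
        congr 1
        exact Finset.sum_congr rfl fun k _ => one_mul _
    _ = (a : ℂ) * ∑ i, ((lam i : ℂ) - (x : ℂ))⁻¹ * ∑ k, ∑ j, P i k j := by
        congr 1
        simp only [hNval, Finset.mul_sum]
        rw [Finset.sum_comm]
        rw [Finset.sum_congr rfl fun k _ => Finset.sum_comm]
        rw [Finset.sum_comm]
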